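/- arXiv:1003.0526 — 2 statements merged into one kernel-verified Lean document; each statement's English description precedes it below -/
import Mathlib

section
/- In the generic setting: for all integers ν ≥ 0 and t ≥ 0 there is an isomorphism of A-modules (G_{ν+t}/L^{ν+1}G_{t−1}) ⊗_B (B/𝔟) ≅ S_{ν+t}/N^{ν+1}S_{t−1}, where A is regarded as a B-algebra via the substitution map φ. -/
/-!
STATEMENT 6: In the generic setting (with `N` a parameter module in `F = A^r`, `w` a minimal
generating family of `N`, giving the matrix `Ñ = (c_ij)`, `c_ij = w j i`, of a minimal free
presentation of `F/N`, and `𝔟 = ker φ = (X_ij - c_ij)B` where `φ : B → A` is the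
substitution map `X_ij ↦ c_ij`): for all `ν, t ≥ 0` there is an isomorphism of `A`-modules
`(G_{ν+t}/L^{ν+1}G_{t-1}) ⊗_B (B/𝔟) ≅ S_{ν+t}/N^{ν+1}S_{t-1}`.

Here `W ⊗_B (B/𝔟)` is realized as `W/𝔟W`, with `A`-module structure obtained by restricting
scalars along the canonical map `A → B` (which coincides with the structure via the
isomorphism `B/𝔟 ≅ A` induced by `φ`, since `φ` splits `A → B`).  On the `A`-side,
`S = Sym_A(A^r)` is `MvPolynomial (Fin r) A`, `N^{ν+1}S_{t-1}` is the indicated submodule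
of `S_{ν+t}`, with the convention `N^{ν+1}S_{-1} = I(N)·N^ν`, `I(N)` being the 0-th Fitting
ideal of `F/N` (the ideal of maximal minors of `Ñ`).
-/

open MvPolynomial IsLocalRing

section GenericSetting

variable (A : Type*) [CommRing A] [IsLocalRing A] (r n : ℕ)

/-- The graded maximal ideal `(𝔪, X)` of the polynomial ring `A[X_ij]`. -/
noncomputable def gradedMaxIdeal : Ideal (MvPolynomial (Fin r × Fin n) A) :=
  Ideal.span ((MvPolynomial.C '' ((maximalIdeal A) : Set A)) ∪ Set.range MvPolynomial.X)

lemma gradedMaxIdeal_eq_ker :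
    gradedMaxIdeal A r n =
      RingHom.ker ((residue A).comp
        (constantCoeff : MvPolynomial (Fin r × Fin n) A →+* A)) := by
  apply le_antisymm
  · rw [gradedMaxIdeal, Ideal.span_le]
    rintro p (⟨m, hm, rfl⟩ | ⟨i, rfl⟩)
    · rw [SetLike.mem_coe, RingHom.mem_ker, RingHom.comp_apply, constantCoeff_C]
      exact Ideal.Quotient.eq_zero_iff_mem.mpr hm
    · rw [SetLike.mem_coe, RingHom.mem_ker, RingHom.comp_apply, constantCoeff_X]
      simp
  · intro p hp
    rw [RingHom.mem_ker, RingHom.comp_apply] at hp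
    replace hp : constantCoeff p ∈ maximalIdeal A := Ideal.Quotient.eq_zero_iff_mem.mp hp
    have h1 : (MvPolynomial.C (constantCoeff p) : MvPolynomial (Fin r × Fin n) A) ∈
        gradedMaxIdeal A r n := Ideal.subset_span (Or.inl ⟨_, hp, rfl⟩)
    have h2 : p - MvPolynomial.C (constantCoeff p) ∈ gradedMaxIdeal A r n := by
      have hX : p - MvPolynomial.C (constantCoeff p) ∈
          Ideal.span (MvPolynomial.X '' (Set.univ : Set (Fin r × Fin n)) :
            Set (MvPolynomial (Fin r × Fin n) A)) := by
        rw [mem_ideal_span_X_image]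
        intro m hm
        simp only [MvPolynomial.mem_support_iff] at hm
        by_cases h : m = 0
        · exfalso
          apply hm
          subst h
          simp [MvPolynomial.constantCoeff_eq]
        · obtain ⟨i, hi⟩ := Finsupp.ne_iff.mp h
          exact ⟨i, trivial, by simpa using hi⟩
      refine Ideal.span_mono ?_ hX
      rintro q ⟨i, -, rfl⟩
      exact Or.inr ⟨i, rfl⟩
    simpa using add_mem h1 h2

instance gradedMaxIdeal_isMaximal : (gradedMaxIdeal A r n).IsMaximal := by
  rw [gradedMaxIdeal_eq_ker]
  have hsurj : Function.Surjective
      ((residue A).comp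
        (constantCoeff : MvPolynomial (Fin r × Fin n) A →+* A)) :=
    residue_surjective.comp fun a => ⟨MvPolynomial.C a, constantCoeff_C _ a⟩
  exact RingHom.ker_isMaximal_of_surjective _ hsurj

-- `B = A[X]_{(𝔪,X)}`: any localization of `A[X]` at the graded maximal ideal `(𝔪, X)`.
variable (B : Type*) [CommRing B] [Algebra (MvPolynomial (Fin r × Fin n) A) B]
  [IsLocalization.AtPrime B (gradedMaxIdeal A r n)]

/-- The entries of the generic matrix `X`, viewed in `B`. -/
noncomputable def xvar (p : Fin r × Fin n) : B :=
  algebraMap (MvPolynomial (Fin r × Fin n) A) B (MvPolynomial.X p)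

/-- The submodule `L = Im(X : B^n → B^r)` of `G = B^r`, spanned by the columns of the
generic matrix. -/
noncomputable def genericColSpan : Submodule B (Fin r → B) :=
  Submodule.span B (Set.range fun j : Fin n => fun i : Fin r => xvar A r n B (i, j))

/-- The canonical embedding of a free module `B^r` onto the degree-one component of
`Sym_B(B^r) = B[T_1, …, T_r]`, sending `v` to `∑ i, v i • T i`. -/
noncomputable def symEmb (C : Type*) [CommRing C] (r : ℕ) :
    (Fin r → C) →ₗ[C] MvPolynomial (Fin r) C :=
  ∑ i : Fin r, LinearMap.smulRight (LinearMap.proj i) (MvPolynomial.X i)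

/-- `L^ν`, the degree-`ν` component of the image `R(L)` of `Sym_B(L) → Sym_B(G)`. -/
noncomputable def Lpow (ν : ℕ) : Submodule B (MvPolynomial (Fin r) B) :=
  ((genericColSpan A r n B).map (symEmb B r)) ^ ν

/-- The ideal `I_s(X)B` of `s × s` minors of the generic matrix `X`. -/
noncomputable def minorsIdeal (s : ℕ) : Ideal B :=
  Ideal.span (Set.range fun rc : (Fin s ↪ Fin r) × (Fin s ↪ Fin n) =>
    (Matrix.of fun i j => xvar A r n B (rc.1 i, rc.2 j)).det)

/-- The ideal `I_r(X)B` of maximal minors of the generic matrix `X`. -/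
noncomputable def maxMinorsIdeal : Ideal B :=
  Ideal.span (Set.range fun c : Fin r ↪ Fin n =>
    (Matrix.of fun i j => xvar A r n B (i, c j)).det)

/-- `I_r(X)B` viewed inside the degree-`0` component of `Sym_B(G)`. -/
noncomputable def maxMinorsSub : Submodule B (MvPolynomial (Fin r) B) :=
  Submodule.map (Algebra.linearMap B (MvPolynomial (Fin r) B))
    (maxMinorsIdeal A r n B : Submodule B B)

/-- The submodule `L^{ν+1}G_{t-1}` of `Sym_B(G)`, with the convention
`L·G_{-1} = I_r(X)B`, so that for `t = 0` it equals `I_r(X)·L^ν`. -/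
noncomputable def LGdenom (ν t : ℕ) : Submodule B (MvPolynomial (Fin r) B) :=
  match t with
  | 0 => maxMinorsSub A r n B * Lpow A r n B ν
  | t' + 1 => Lpow A r n B (ν + 1) * homogeneousSubmodule (Fin r) B t'

/-- The quotient `G_{ν+t}/L^{ν+1}G_{t-1}`. -/
noncomputable abbrev GQuot (ν t : ℕ) :=
  homogeneousSubmodule (Fin r) B (ν + t) ⧸
    (LGdenom A r n B ν t).comap (homogeneousSubmodule (Fin r) B (ν + t)).subtype

end GenericSetting

noncomputable def minGens {A : Type*} [CommRing A] {M : Type*} [AddCommGroup M] [Module A M]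
    (N : Submodule A M) : ℕ :=
  sInf {k : ℕ | ∃ s : Finset M, s.card = k ∧ Submodule.span A (s : Set M) = N}

structure IsParameterModule (A : Type*) [CommRing A] [IsLocalRing A] (d r : ℕ)
    (N : Submodule A (Fin r → A)) : Prop where
  finiteLength : IsFiniteLength A ((Fin r → A) ⧸ N)
  le_smul_top : N ≤ (IsLocalRing.maximalIdeal A) • (⊤ : Submodule A (Fin r → A))
  mu_eq : minGens N = d + r - 1

/-- `N^ν`, the degree-`ν` component of the image of `Sym_A(N) → Sym_A(F)`. -/
noncomputable def modulePow {A : Type*} [CommRing A] {r : ℕ}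
    (N : Submodule A (Fin r → A)) (ν : ℕ) : Submodule A (MvPolynomial (Fin r) A) :=
  (N.map (symEmb A r)) ^ ν

/-- The 0-th Fitting ideal `I(N)`: the ideal of maximal minors of the `r × n` matrix whose
`j`-th column is `w j`. -/
noncomputable def fittingIdeal {A : Type*} [CommRing A] {r n : ℕ}
    (w : Fin n → (Fin r → A)) : Ideal A :=
  Ideal.span (Set.range fun c : Fin r ↪ Fin n => (Matrix.of fun i i' => w (c i') i).det)

/-- The submodule `N^{ν+1}S_{t-1}` of `S_{ν+t}`, with the convention
`N^{ν+1}S_{-1} = I(N)·N^ν`. -/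
noncomputable def NSdenom {A : Type*} [CommRing A] {r : ℕ}
    (N : Submodule A (Fin r → A)) (IN : Ideal A) (ν t : ℕ) :
    Submodule A (MvPolynomial (Fin r) A) :=
  match t with
  | 0 => Submodule.map (Algebra.linearMap A (MvPolynomial (Fin r) A)) (IN : Submodule A A) *
      modulePow N ν
  | t' + 1 => modulePow N (ν + 1) * homogeneousSubmodule (Fin r) A t'

/-- The quotient `S_{ν+t}/N^{ν+1}S_{t-1}`. -/
noncomputable abbrev BRQuotGen {A : Type*} [CommRing A] {r : ℕ}
    (N : Submodule A (Fin r → A)) (IN : Ideal A) (ν t : ℕ) :=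
  homogeneousSubmodule (Fin r) A (ν + t) ⧸
    (NSdenom N IN ν t).comap (homogeneousSubmodule (Fin r) A (ν + t)).subtype

/-- The ideal `𝔟 = ker φ = (X_ij - c_ij | i, j) ⊆ B`, `c_ij = w j i`. -/
noncomputable def substKernel (A : Type*) [CommRing A] [IsLocalRing A] (r n : ℕ)
    (B : Type*) [CommRing B] [Algebra (MvPolynomial (Fin r × Fin n) A) B]
    [IsLocalization.AtPrime B (gradedMaxIdeal A r n)]
    (w : Fin n → (Fin r → A)) : Ideal B :=
  Ideal.span (Set.range fun p : Fin r × Fin n =>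
    xvar A r n B p -
      algebraMap (MvPolynomial (Fin r × Fin n) A) B (MvPolynomial.C (w p.2 p.1)))

/-- The canonical ring map `A → B = A[X]_{(𝔪,X)}`, a section of the substitution map `φ`. -/
noncomputable def baseHom (A : Type*) [CommRing A] [IsLocalRing A] (r n : ℕ)
    (B : Type*) [CommRing B] [Algebra (MvPolynomial (Fin r × Fin n) A) B]
    [IsLocalization.AtPrime B (gradedMaxIdeal A r n)] : A →+* B :=
  (algebraMap (MvPolynomial (Fin r × Fin n) A) B).comp
    (MvPolynomial.C : A →+* MvPolynomial (Fin r × Fin n) A)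

/-! ### Auxiliary development for the proof -/

section AuxProof

open MvPolynomial IsLocalRing

variable (A : Type*) [CommRing A] [IsLocalRing A] (r n : ℕ)

/-- Any polynomial minus its constant coefficient lies in the ideal generated by the
variables. -/
lemma aux_sub_C_mem {σ : Type*} (p : MvPolynomial σ A) :
    p - MvPolynomial.C (constantCoeff p) ∈
      Ideal.span (Set.range (MvPolynomial.X : σ → MvPolynomial σ A)) := by
  have hX : p - MvPolynomial.C (constantCoeff p) ∈
      Ideal.span (MvPolynomial.X '' (Set.univ : Set σ) : Set (MvPolynomial σ A)) := by
    rw [mem_ideal_span_X_image]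
    intro m hm
    simp only [MvPolynomial.mem_support_iff] at hm
    by_cases h : m = 0
    · exfalso
      apply hm
      subst h
      simp [MvPolynomial.constantCoeff_eq]
    · obtain ⟨i, hi⟩ := Finsupp.ne_iff.mp h
      exact ⟨i, trivial, by simpa using hi⟩
  simpa [Set.image_univ] using hX

variable (w : Fin n → (Fin r → A))

/-- The substitution map `A[X] → A`, `X_ij ↦ c_ij = w j i`. -/
noncomputable def phiZero : MvPolynomial (Fin r × Fin n) A →+* A :=
  (MvPolynomial.eval (fun p : Fin r × Fin n => w p.2 p.1) :
    MvPolynomial (Fin r × Fin n) A →+* A)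

lemma phiZero_C (a : A) : phiZero A r n w (MvPolynomial.C a) = a := by
  simp [phiZero]

lemma phiZero_X (p : Fin r × Fin n) : phiZero A r n w (MvPolynomial.X p) = w p.2 p.1 := by
  simp [phiZero]

variable (hc : ∀ p : Fin r × Fin n, w p.2 p.1 ∈ maximalIdeal A)

include hc in
lemma phiZero_isUnit (y : (gradedMaxIdeal A r n).primeCompl) :
    IsUnit (phiZero A r n w y.1) := by
  have hcc : constantCoeff (y.1 : MvPolynomial (Fin r × Fin n) A) ∉ maximalIdeal A := by
    intro h
    apply y.2
    show (y.1 : MvPolynomial (Fin r × Fin n) A) ∈ gradedMaxIdeal A r n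
    refine (le_of_eq (gradedMaxIdeal_eq_ker A r n).symm) ?_
    rw [RingHom.mem_ker, RingHom.comp_apply]
    exact Ideal.Quotient.eq_zero_iff_mem.mpr h
  have hdiff : phiZero A r n w (y.1 - MvPolynomial.C (constantCoeff y.1)) ∈
      maximalIdeal A := by
    have h1 := aux_sub_C_mem A (σ := Fin r × Fin n) y.1
    have h2 : (y.1 - MvPolynomial.C (constantCoeff y.1)) ∈
        Ideal.comap (phiZero A r n w) (maximalIdeal A) := by
      refine Ideal.span_le.mpr ?_ h1
      rintro q ⟨p, rfl⟩
      simpa [phiZero_X] using hc p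
    exact h2
  rw [map_sub, phiZero_C] at hdiff
  by_contra hu
  have : phiZero A r n w y.1 ∈ maximalIdeal A := by
    rw [IsLocalRing.mem_maximalIdeal]
    exact hu
  exact hcc (by simpa using sub_mem this hdiff)

variable (B : Type*) [CommRing B] [Algebra (MvPolynomial (Fin r × Fin n) A) B]
  [IsLocalization.AtPrime B (gradedMaxIdeal A r n)]

/-- The substitution map `φ : B → A`. -/
noncomputable def phiB : B →+* A :=
  IsLocalization.lift (S := B) (phiZero_isUnit A r n w hc)

lemma phiB_algebraMap (p : MvPolynomial (Fin r × Fin n) A) :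
    phiB A r n w hc B (algebraMap (MvPolynomial (Fin r × Fin n) A) B p) =
      phiZero A r n w p :=
  IsLocalization.lift_eq _ _

lemma phiB_baseHom (a : A) : phiB A r n w hc B (baseHom A r n B a) = a := by
  rw [baseHom, RingHom.comp_apply, phiB_algebraMap, phiZero_C]

lemma phiB_xvar (p : Fin r × Fin n) :
    phiB A r n w hc B (xvar A r n B p) = w p.2 p.1 := by
  rw [xvar, phiB_algebraMap, phiZero_X]

lemma phiB_surjective : Function.Surjective (phiB A r n w hc B) :=
  fun a => ⟨baseHom A r n B a, phiB_baseHom A r n w hc B a⟩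

lemma aux_algebraMap_sub_baseHom_mem (p : MvPolynomial (Fin r × Fin n) A) :
    algebraMap (MvPolynomial (Fin r × Fin n) A) B p -
      baseHom A r n B (phiZero A r n w p) ∈ substKernel A r n B w := by
  induction p using MvPolynomial.induction_on with
  | C a =>
      simp only [phiZero_C]
      rw [baseHom, RingHom.comp_apply, sub_self]
      exact zero_mem _
  | add p q hp hq =>
      rw [map_add, map_add, map_add]
      convert add_mem hp hq using 1
      ring
  | mul_X p q hp =>
      have hgen : xvar A r n B q - baseHom A r n B (w q.2 q.1) ∈ substKernel A r n B w := by
        refine Ideal.subset_span ⟨q, ?_⟩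
        rfl
      have heq : algebraMap (MvPolynomial (Fin r × Fin n) A) B (p * MvPolynomial.X q) -
          baseHom A r n B (phiZero A r n w (p * MvPolynomial.X q)) =
          algebraMap (MvPolynomial (Fin r × Fin n) A) B p *
            (xvar A r n B q - baseHom A r n B (w q.2 q.1)) +
          (algebraMap (MvPolynomial (Fin r × Fin n) A) B p -
            baseHom A r n B (phiZero A r n w p)) * baseHom A r n B (w q.2 q.1) := by
        rw [map_mul, map_mul, phiZero_X, map_mul]
        rw [xvar]
        ring
      rw [heq]
      exact add_mem (Ideal.mul_mem_left _ _ hgen) (Ideal.mul_mem_right _ _ hp)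

lemma sub_baseHom_phiB_mem (b : B) :
    b - baseHom A r n B (phiB A r n w hc B b) ∈ substKernel A r n B w := by
  obtain ⟨⟨p, s⟩, hps⟩ := IsLocalization.surj (gradedMaxIdeal A r n).primeCompl b
  have hu : IsUnit (algebraMap (MvPolynomial (Fin r × Fin n) A) B s.1) :=
    IsLocalization.map_units B s
  have key : algebraMap (MvPolynomial (Fin r × Fin n) A) B s.1 *
      (b - baseHom A r n B (phiB A r n w hc B b)) ∈ substKernel A r n B w := by
    have hφp : phiZero A r n w p = phiB A r n w hc B b * phiZero A r n w s.1 := by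
      have := congrArg (phiB A r n w hc B) hps
      rw [map_mul, phiB_algebraMap, phiB_algebraMap] at this
      exact this.symm
    have h1 := aux_algebraMap_sub_baseHom_mem A r n w B p
    have h2 := aux_algebraMap_sub_baseHom_mem A r n w B s.1
    have heq : algebraMap (MvPolynomial (Fin r × Fin n) A) B s.1 *
        (b - baseHom A r n B (phiB A r n w hc B b)) =
        (algebraMap (MvPolynomial (Fin r × Fin n) A) B p -
          baseHom A r n B (phiZero A r n w p)) -
        (algebraMap (MvPolynomial (Fin r × Fin n) A) B s.1 -
          baseHom A r n B (phiZero A r n w s.1)) *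
          baseHom A r n B (phiB A r n w hc B b) := by
      rw [mul_sub, mul_comm, hps, hφp, map_mul]
      ring
    rw [heq]
    exact sub_mem h1 (Ideal.mul_mem_right _ _ h2)
  have := Ideal.mul_mem_left (substKernel A r n B w) (hu.unit⁻¹ : Bˣ) key
  rwa [← mul_assoc, IsUnit.val_inv_mul, one_mul] at this

lemma mem_substKernel_of_phiB_eq_zero {b : B} (hb : phiB A r n w hc B b = 0) :
    b ∈ substKernel A r n B w := by
  have := sub_baseHom_phiB_mem A r n w hc B b
  rwa [hb, map_zero, sub_zero] at this

lemma substKernel_le_ker :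
    substKernel A r n B w ≤ RingHom.ker (phiB A r n w hc B) := by
  rw [substKernel, Ideal.span_le]
  rintro b ⟨p, rfl⟩
  rw [SetLike.mem_coe, RingHom.mem_ker, map_sub, phiB_xvar]
  have : phiB A r n w hc B
      (algebraMap (MvPolynomial (Fin r × Fin n) A) B (MvPolynomial.C (w p.2 p.1))) =
      w p.2 p.1 := by rw [phiB_algebraMap, phiZero_C]
  rw [this, sub_self]

end AuxProof

/-! ### Correspondence of submodules under a surjective coefficient map -/

section Corr

open MvPolynomial

variable {B A : Type*} [CommRing B] [CommRing A] {r : ℕ} (f : B →+* A)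

/-- The coefficient-wise map on polynomials. -/
noncomputable abbrev polyMap : MvPolynomial (Fin r) B →+* MvPolynomial (Fin r) A :=
  MvPolynomial.map f

lemma polyMap_smul (b : B) (z : MvPolynomial (Fin r) B) :
    polyMap f (b • z) = f b • polyMap f z := by
  rw [MvPolynomial.smul_eq_C_mul, map_mul, MvPolynomial.map_C,
    MvPolynomial.smul_eq_C_mul]

/-- Correspondence of a `B`-submodule and an `A`-submodule under `polyMap f`. -/
def Corr (U : Submodule B (MvPolynomial (Fin r) B))
    (V : Submodule A (MvPolynomial (Fin r) A)) : Prop :=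
  (∀ z ∈ U, polyMap f z ∈ V) ∧ (∀ y ∈ V, ∃ z ∈ U, polyMap f z = y)

lemma corr_span (hf : Function.Surjective f) (S : Set (MvPolynomial (Fin r) B)) :
    Corr f (Submodule.span B S) (Submodule.span A (polyMap f '' S)) := by
  constructor
  · intro z hz
    induction hz using Submodule.span_induction with
    | mem x hx => exact Submodule.subset_span ⟨x, hx, rfl⟩
    | zero => rw [map_zero]; exact zero_mem _
    | add x y _ _ hx hy => rw [map_add]; exact add_mem hx hy
    | smul b x _ hx => rw [polyMap_smul]; exact Submodule.smul_mem _ _ hx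
  · intro y hy
    induction hy using Submodule.span_induction with
    | mem x hx =>
        obtain ⟨s, hs, rfl⟩ := hx
        exact ⟨s, Submodule.subset_span hs, rfl⟩
    | zero => exact ⟨0, zero_mem _, map_zero _⟩
    | add x y _ _ hx hy =>
        obtain ⟨z₁, hz₁, rfl⟩ := hx
        obtain ⟨z₂, hz₂, rfl⟩ := hy
        exact ⟨z₁ + z₂, add_mem hz₁ hz₂, map_add _ _ _⟩
    | smul a x _ hx =>
        obtain ⟨z, hz, rfl⟩ := hx
        obtain ⟨b, rfl⟩ := hf a
        exact ⟨b • z, Submodule.smul_mem _ _ hz, polyMap_smul f b z⟩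

lemma corr_mul {U₁ U₂ : Submodule B (MvPolynomial (Fin r) B)}
    {V₁ V₂ : Submodule A (MvPolynomial (Fin r) A)}
    (h₁ : Corr f U₁ V₁) (h₂ : Corr f U₂ V₂) :
    Corr f (U₁ * U₂) (V₁ * V₂) := by
  constructor
  · intro z hz
    refine Submodule.mul_induction_on hz ?_ ?_
    · intro m hm x hx
      rw [map_mul]; exact Submodule.mul_mem_mul (h₁.1 m hm) (h₂.1 x hx)
    · intro x y hx hy
      rw [map_add]; exact add_mem hx hy
  · intro y hy
    refine Submodule.mul_induction_on hy ?_ ?_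
    · intro m hm x hx
      obtain ⟨z₁, hz₁, rfl⟩ := h₁.2 m hm
      obtain ⟨z₂, hz₂, rfl⟩ := h₂.2 x hx
      exact ⟨z₁ * z₂, Submodule.mul_mem_mul hz₁ hz₂, map_mul _ _ _⟩
    · rintro x y ⟨z₁, hz₁, rfl⟩ ⟨z₂, hz₂, rfl⟩
      exact ⟨z₁ + z₂, add_mem hz₁ hz₂, map_add _ _ _⟩

lemma corr_one (r : ℕ) (hf : Function.Surjective f) :
    Corr f (1 : Submodule B (MvPolynomial (Fin r) B))
      (1 : Submodule A (MvPolynomial (Fin r) A)) := by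
  have h := corr_span f hf ({1} : Set (MvPolynomial (Fin r) B))
  rw [Set.image_singleton, map_one] at h
  rw [Submodule.one_eq_span, Submodule.one_eq_span]
  exact h

lemma corr_pow (hf : Function.Surjective f) {U : Submodule B (MvPolynomial (Fin r) B)}
    {V : Submodule A (MvPolynomial (Fin r) A)} (h : Corr f U V) (ν : ℕ) :
    Corr f (U ^ ν) (V ^ ν) := by
  induction ν with
  | zero => simpa using corr_one f r hf
  | succ k ih => rw [pow_succ, pow_succ]; exact corr_mul f ih h

lemma homogeneousSubmodule_eq_span_monomial (R : Type*) [CommRing R] (r k : ℕ) :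
    homogeneousSubmodule (Fin r) R k =
      Submodule.span R ((fun m : (Fin r) →₀ ℕ => monomial m (1 : R)) ''
        {m | m.degree = k}) := by
  apply le_antisymm
  · intro p hp
    rw [MvPolynomial.mem_homogeneousSubmodule] at hp
    rw [p.as_sum]
    refine Submodule.sum_mem _ fun v hv => ?_
    have hdeg : v.degree = k := by
      rw [Finsupp.degree_eq_weight_one]
      exact hp (MvPolynomial.mem_support_iff.mp hv)
    have : (monomial v) (coeff v p) = (coeff v p) • (monomial v (1 : R)) := by
      rw [MvPolynomial.smul_monomial, smul_eq_mul, mul_one]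
    rw [this]
    exact Submodule.smul_mem _ _ (Submodule.subset_span ⟨v, hdeg, rfl⟩)
  · rw [Submodule.span_le]
    rintro q ⟨m, hm, rfl⟩
    rw [SetLike.mem_coe, MvPolynomial.mem_homogeneousSubmodule]
    exact MvPolynomial.isHomogeneous_monomial _ hm

lemma corr_homogeneousSubmodule (hf : Function.Surjective f) (k : ℕ) :
    Corr f (homogeneousSubmodule (Fin r) B k) (homogeneousSubmodule (Fin r) A k) := by
  rw [homogeneousSubmodule_eq_span_monomial B r k, homogeneousSubmodule_eq_span_monomial A r k]
  have h := corr_span f hf ((fun m : (Fin r) →₀ ℕ => monomial m (1 : B)) '' {m | m.degree = k})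
  rw [Set.image_image] at h
  simpa [MvPolynomial.map_monomial] using h

end Corr

/-! ### Specific correspondences for `LGdenom` and `NSdenom` -/

section Specific

open MvPolynomial IsLocalRing

lemma isHomogeneous_polyMap {S T : Type*} [CommRing S] [CommRing T] {r : ℕ} (f : S →+* T)
    {k : ℕ} {z : MvPolynomial (Fin r) S} (hz : z.IsHomogeneous k) :
    (MvPolynomial.map f z).IsHomogeneous k := by
  intro d hd
  refine hz fun h => hd ?_
  rw [MvPolynomial.coeff_map, h, map_zero]

lemma symEmb_apply (C : Type*) [CommRing C] (r : ℕ) (v : Fin r → C) :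
    symEmb C r v = ∑ i : Fin r, v i • MvPolynomial.X i := by
  simp [symEmb]

lemma polyMap_symEmb {S T : Type*} [CommRing S] [CommRing T] {r : ℕ} (f : S →+* T)
    (v : Fin r → S) :
    MvPolynomial.map f (symEmb S r v) = symEmb T r (fun i => f (v i)) := by
  rw [symEmb_apply, symEmb_apply, map_sum]
  refine Finset.sum_congr rfl fun i _ => ?_
  rw [MvPolynomial.smul_eq_C_mul, map_mul, MvPolynomial.map_C, MvPolynomial.map_X,
    MvPolynomial.smul_eq_C_mul]

lemma symEmb_mem_homog (C : Type*) [CommRing C] (r : ℕ) (v : Fin r → C) :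
    symEmb C r v ∈ homogeneousSubmodule (Fin r) C 1 := by
  rw [symEmb_apply]
  refine Submodule.sum_mem _ fun i _ => Submodule.smul_mem _ _ ?_
  rw [mem_homogeneousSubmodule]
  exact MvPolynomial.isHomogeneous_X _ _

lemma mem_ideal_smul_of_coeff {C : Type*} [CommRing C] {r : ℕ} {J : Ideal C} {k : ℕ}
    {d : MvPolynomial (Fin r) C} (hdH : d ∈ homogeneousSubmodule (Fin r) C k)
    (hco : ∀ m, MvPolynomial.coeff m d ∈ J) :
    (⟨d, hdH⟩ : homogeneousSubmodule (Fin r) C k) ∈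
      J • (⊤ : Submodule C (homogeneousSubmodule (Fin r) C k)) := by
  have hmem : d ∈ J • (homogeneousSubmodule (Fin r) C k : Submodule C (MvPolynomial (Fin r) C)) := by
    nth_rewrite 1 [d.as_sum]
    refine Submodule.sum_mem _ fun v hv => ?_
    have hvH : (monomial v (1 : C)) ∈ homogeneousSubmodule (Fin r) C k := by
      rw [mem_homogeneousSubmodule]
      refine MvPolynomial.isHomogeneous_monomial _ ?_
      rw [Finsupp.degree_eq_weight_one]
      have hdh' : d.IsHomogeneous k := hdH
      exact hdh' (MvPolynomial.mem_support_iff.mp hv)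
    have : (monomial v) (coeff v d) = (coeff v d) • (monomial v (1 : C)) := by
      rw [MvPolynomial.smul_monomial, smul_eq_mul, mul_one]
    rw [this]
    exact Submodule.smul_mem_smul (hco v) hvH
  have hmap : d ∈ Submodule.map (homogeneousSubmodule (Fin r) C k).subtype
      (J • (⊤ : Submodule C (homogeneousSubmodule (Fin r) C k))) := by
    rw [Submodule.map_smul'', Submodule.map_subtype_top]
    exact hmem
  obtain ⟨e, he, hev⟩ := hmap
  have : e = ⟨d, hdH⟩ := Subtype.ext hev
  rwa [this] at he

variable (A : Type*) [CommRing A] [IsLocalRing A] (r n : ℕ)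
variable (w : Fin n → (Fin r → A))
variable (hc : ∀ p : Fin r × Fin n, w p.2 p.1 ∈ maximalIdeal A)
variable (B : Type*) [CommRing B] [Algebra (MvPolynomial (Fin r × Fin n) A) B]
  [IsLocalization.AtPrime B (gradedMaxIdeal A r n)]
variable (N : Submodule A (Fin r → A)) (hw : Submodule.span A (Set.range w) = N)

include hw in
lemma corr_colSpan :
    Corr (phiB A r n w hc B)
      (Submodule.map (symEmb B r) (genericColSpan A r n B))
      (Submodule.map (symEmb A r) N) := by
  rw [genericColSpan, Submodule.map_span, ← hw, Submodule.map_span,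
    ← Set.range_comp, ← Set.range_comp]
  have h := corr_span (phiB A r n w hc B)
    (phiB_surjective A r n w hc B)
    (Set.range (⇑(symEmb B r) ∘ fun j : Fin n => fun i : Fin r => xvar A r n B (i, j)))
  rw [← Set.range_comp] at h
  have key : (MvPolynomial.map (phiB A r n w hc B)) ∘
      (⇑(symEmb B r) ∘ fun j : Fin n => fun i : Fin r => xvar A r n B (i, j)) =
      ⇑(symEmb A r) ∘ w := by
    funext j
    show MvPolynomial.map (phiB A r n w hc B) (symEmb B r fun i => xvar A r n B (i, j)) =
      symEmb A r (w j)
    rw [polyMap_symEmb]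
    congr 1
    funext i
    rw [phiB_xvar]
  rw [key] at h
  exact h

lemma corr_maxMinors :
    Corr (phiB A r n w hc B)
      (maxMinorsSub A r n B)
      (Submodule.map (Algebra.linearMap A (MvPolynomial (Fin r) A))
        ((fittingIdeal w : Ideal A) : Submodule A A)) := by
  rw [maxMinorsSub, maxMinorsIdeal, Ideal.span, Submodule.map_span,
    fittingIdeal, Ideal.span, Submodule.map_span, ← Set.range_comp, ← Set.range_comp]
  have h := corr_span (phiB A r n w hc B)
    (phiB_surjective A r n w hc B)
    (Set.range (⇑(Algebra.linearMap B (MvPolynomial (Fin r) B)) ∘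
      fun c : Fin r ↪ Fin n => (Matrix.of fun i j => xvar A r n B (i, c j)).det))
  rw [← Set.range_comp] at h
  have key : (MvPolynomial.map (phiB A r n w hc B)) ∘
      (⇑(Algebra.linearMap B (MvPolynomial (Fin r) B)) ∘
        fun c : Fin r ↪ Fin n => (Matrix.of fun i j => xvar A r n B (i, c j)).det) =
      ⇑(Algebra.linearMap A (MvPolynomial (Fin r) A)) ∘
        fun c : Fin r ↪ Fin n => (Matrix.of fun i i' => w (c i') i).det := by
    funext c
    show MvPolynomial.map (phiB A r n w hc B)
        ((Algebra.linearMap B (MvPolynomial (Fin r) B))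
          (Matrix.of fun i j => xvar A r n B (i, c j)).det) =
      (Algebra.linearMap A (MvPolynomial (Fin r) A))
        (Matrix.of fun i i' => w (c i') i).det
    simp only [Algebra.linearMap_apply, MvPolynomial.algebraMap_eq]
    rw [MvPolynomial.map_C]
    congr 1
    rw [RingHom.map_det]
    congr 1
    ext i j
    simp [Matrix.map_apply, phiB_xvar]
  rw [key] at h
  exact h

include hw in
lemma corr_Lpow (ν : ℕ) :
    Corr (phiB A r n w hc B) (Lpow A r n B ν) (modulePow N ν) := by
  rw [Lpow, modulePow]
  exact corr_pow _ (phiB_surjective A r n w hc B)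
    (corr_colSpan A r n w hc B N hw) ν

include hw in
lemma corr_LGdenom (ν t : ℕ) :
    Corr (phiB A r n w hc B) (LGdenom A r n B ν t)
      (NSdenom N (fittingIdeal w) ν t) := by
  cases t with
  | zero =>
      exact corr_mul _ (corr_maxMinors A r n w hc B)
        (corr_Lpow A r n w hc B N hw ν)
  | succ t' =>
      exact corr_mul _ (corr_Lpow A r n w hc B N hw (ν + 1))
        (corr_homogeneousSubmodule _ (phiB_surjective A r n w hc B) t')

lemma Lpow_le_homog (ν : ℕ) :
    Lpow A r n B ν ≤ homogeneousSubmodule (Fin r) B ν := by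
  induction ν with
  | zero =>
      rw [Lpow, pow_zero, Submodule.one_eq_span, Submodule.span_le,
        Set.singleton_subset_iff]
      rw [SetLike.mem_coe, mem_homogeneousSubmodule]
      exact MvPolynomial.isHomogeneous_one _ _
  | succ k ih =>
      rw [Lpow, pow_succ]
      have h1 : Submodule.map (symEmb B r) (genericColSpan A r n B) ≤
          homogeneousSubmodule (Fin r) B 1 := by
        rintro q ⟨v, -, rfl⟩
        exact symEmb_mem_homog B r v
      exact le_trans (mul_le_mul' ih h1) (homogeneousSubmodule_mul k 1)
  
lemma maxMinorsSub_le_homog :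
    maxMinorsSub A r n B ≤ homogeneousSubmodule (Fin r) B 0 := by
  rintro q ⟨b, -, rfl⟩
  show ((Algebra.linearMap B (MvPolynomial (Fin r) B)) b).IsHomogeneous 0
  simp only [Algebra.linearMap_apply, MvPolynomial.algebraMap_eq]
  exact MvPolynomial.isHomogeneous_C _ _

lemma LGdenom_le_homog (ν t : ℕ) :
    LGdenom A r n B ν t ≤ homogeneousSubmodule (Fin r) B (ν + t) := by
  cases t with
  | zero =>
      refine le_trans (mul_le_mul' (maxMinorsSub_le_homog A r n B)
        (Lpow_le_homog A r n B ν)) ?_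
      have := homogeneousSubmodule_mul (σ := Fin r) (R := B) 0 ν
      rwa [zero_add] at this
  | succ t' =>
      refine le_trans (mul_le_mul' (Lpow_le_homog A r n B (ν + 1))
        (le_refl (homogeneousSubmodule (Fin r) B t'))) ?_
      have := homogeneousSubmodule_mul (σ := Fin r) (R := B) (ν + 1) t'
      have harith : ν + 1 + t' = ν + (t' + 1) := by omega
      rwa [harith] at this

end Specific

theorem generic_quotient_base_change_iso
    (A : Type*) [CommRing A] [IsNoetherianRing A] [IsLocalRing A]
    (d : ℕ) (hd : 0 < d) (hdim : ringKrullDim A = (d : ℕ))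
    (r : ℕ) (hr : 0 < r) (n : ℕ) (hn : n = d + r - 1)
    (N : Submodule A (Fin r → A)) (hN : IsParameterModule A d r N)
    (w : Fin n → (Fin r → A)) (hw : Submodule.span A (Set.range w) = N)
    (B : Type*) [CommRing B] [Algebra (MvPolynomial (Fin r × Fin n) A) B]
    [IsLocalization.AtPrime B (gradedMaxIdeal A r n)]
    (ν t : ℕ) :
    Nonempty (
      letI : Module A
          (GQuot A r n B ν t ⧸
            (substKernel A r n B w • (⊤ : Submodule B (GQuot A r n B ν t)))) :=
        Module.compHom _ (baseHom A r n B)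
      (GQuot A r n B ν t ⧸
          (substKernel A r n B w • (⊤ : Submodule B (GQuot A r n B ν t)))) ≃ₗ[A]
        BRQuotGen N (fittingIdeal w) ν t) := by
  classical
  have hc : ∀ p : Fin r × Fin n, w p.2 p.1 ∈ maximalIdeal A := by
    intro p
    have hwN : w p.2 ∈ N := by
      rw [← hw]; exact Submodule.subset_span ⟨p.2, rfl⟩
    have hmem := hN.le_smul_top hwN
    have hcoord : (maximalIdeal A) • (⊤ : Submodule A (Fin r → A)) ≤
        Submodule.comap (LinearMap.proj p.1 : (Fin r → A) →ₗ[A] A)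
          ((maximalIdeal A : Submodule A A)) := by
      rw [Submodule.smul_le]
      intro a ha v _
      simp only [Submodule.mem_comap, LinearMap.proj_apply, Pi.smul_apply, smul_eq_mul]
      exact Ideal.mul_mem_right _ _ ha
    exact hcoord hmem
  set φ := phiB A r n w hc B with hφdef
  haveI hrs : RingHomSurjective φ := ⟨phiB_surjective A r n w hc B⟩
  set HB := homogeneousSubmodule (Fin r) B (ν + t) with hHB
  set HA := homogeneousSubmodule (Fin r) A (ν + t) with hHA
  set DB := (LGdenom A r n B ν t).comap HB.subtype with hDB
  set DA := (NSdenom N (fittingIdeal w) ν t).comap HA.subtype with hDA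
  have hcorr := corr_LGdenom A r n w hc B N hw ν t
  have hLG := LGdenom_le_homog A r n B ν t
  let ΦL : MvPolynomial (Fin r) B →ₛₗ[φ] MvPolynomial (Fin r) A :=
    { toFun := MvPolynomial.map φ
      map_add' := fun x y => map_add _ x y
      map_smul' := fun b z => polyMap_smul φ b z }
  have hres : ∀ x : HB, (ΦL.comp HB.subtype) x ∈ HA := fun x =>
    isHomogeneous_polyMap φ x.2
  let f1 : HB →ₛₗ[φ] HA := LinearMap.codRestrict HA (ΦL.comp HB.subtype) hres
  let g : HB →ₛₗ[φ] (HA ⧸ DA) := DA.mkQ.comp f1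
  have hg_apply : ∀ x : HB,
      g x = DA.mkQ ⟨MvPolynomial.map φ x.1, isHomogeneous_polyMap φ x.2⟩ :=
    fun x => rfl
  have hkerg : DB ≤ LinearMap.ker g := by
    intro x hx
    rw [LinearMap.mem_ker, hg_apply, Submodule.mkQ_apply, Submodule.Quotient.mk_eq_zero]
    show MvPolynomial.map φ x.1 ∈ NSdenom N (fittingIdeal w) ν t
    exact hcorr.1 _ hx
  let ghat : (HB ⧸ DB) →ₛₗ[φ] (HA ⧸ DA) := DB.liftQ g hkerg
  set J := substKernel A r n B w with hJ
  have hkb : J • (⊤ : Submodule B (HB ⧸ DB)) ≤ LinearMap.ker ghat := by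
    rw [Submodule.smul_le]
    intro b hb x _
    rw [LinearMap.mem_ker, map_smulₛₗ]
    have hb0 : φ b = 0 := substKernel_le_ker A r n w hc B hb
    rw [hb0, zero_smul]
  let gbar : ((HB ⧸ DB) ⧸ (J • (⊤ : Submodule B (HB ⧸ DB)))) →ₛₗ[φ] (HA ⧸ DA) :=
    Submodule.liftQ _ ghat hkb
  have hgbar : ∀ x : HB, gbar ((J • (⊤ : Submodule B (HB ⧸ DB))).mkQ (DB.mkQ x)) = g x :=
    fun x => rfl
  have hsurj : Function.Surjective gbar := by
    intro q
    obtain ⟨y, rfl⟩ := Submodule.mkQ_surjective DA q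
    have hyH : (MvPolynomial.map (baseHom A r n B) y.1) ∈ HB :=
      isHomogeneous_polyMap _ y.2
    refine ⟨(J • (⊤ : Submodule B (HB ⧸ DB))).mkQ
      (DB.mkQ ⟨MvPolynomial.map (baseHom A r n B) y.1, hyH⟩), ?_⟩
    rw [hgbar, hg_apply]
    congr 1
    apply Subtype.ext
    show MvPolynomial.map φ (MvPolynomial.map (baseHom A r n B) y.1) = y.1
    rw [MvPolynomial.map_map]
    have hcomp : φ.comp (baseHom A r n B) = RingHom.id A :=
      RingHom.ext (phiB_baseHom A r n w hc B)
    rw [hcomp, MvPolynomial.map_id]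
  have hinjker : ∀ x : HB,
      gbar ((J • (⊤ : Submodule B (HB ⧸ DB))).mkQ (DB.mkQ x)) = 0 →
        (J • (⊤ : Submodule B (HB ⧸ DB))).mkQ (DB.mkQ x) = 0 := by
    intro x hx0
    rw [hgbar, hg_apply, Submodule.mkQ_apply, Submodule.Quotient.mk_eq_zero] at hx0
    have hgx : MvPolynomial.map φ x.1 ∈ NSdenom N (fittingIdeal w) ν t := hx0
    obtain ⟨z, hzLG, hzφ⟩ := hcorr.2 _ hgx
    have hzH : z ∈ HB := hLG hzLG
    have hdH : x.1 - z ∈ HB := sub_mem x.2 hzH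
    have hdco : ∀ m, MvPolynomial.coeff m (x.1 - z) ∈ J := by
      intro m
      apply mem_substKernel_of_phiB_eq_zero A r n w hc B
      have h0 : MvPolynomial.map φ (x.1 - z) = 0 := by
        rw [map_sub, hzφ, sub_self]
      show φ (MvPolynomial.coeff m (x.1 - z)) = 0
      rw [← MvPolynomial.coeff_map, h0, MvPolynomial.coeff_zero]
    have hsmul : (⟨x.1 - z, hdH⟩ : HB) ∈ J • (⊤ : Submodule B HB) :=
      mem_ideal_smul_of_coeff hdH hdco
    rw [Submodule.mkQ_apply, Submodule.Quotient.mk_eq_zero]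
    have hxsplit : DB.mkQ x = DB.mkQ ⟨x.1 - z, hdH⟩ + DB.mkQ ⟨z, hzH⟩ := by
      rw [← map_add]
      congr 1
      exact Subtype.ext (by simp)
    have hz0 : DB.mkQ ⟨z, hzH⟩ = 0 := by
      rw [Submodule.mkQ_apply, Submodule.Quotient.mk_eq_zero]
      exact hzLG
    rw [hxsplit, hz0, add_zero]
    have hmapped : DB.mkQ ⟨x.1 - z, hdH⟩ ∈
        Submodule.map DB.mkQ (J • (⊤ : Submodule B HB)) :=
      Submodule.mem_map_of_mem hsmul
    rw [Submodule.map_smul''] at hmapped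
    have hle : J • Submodule.map DB.mkQ (⊤ : Submodule B HB) ≤
        J • (⊤ : Submodule B (HB ⧸ DB)) := Submodule.smul_mono le_rfl le_top
    exact hle hmapped
  have hinj : Function.Injective gbar := by
    rw [← LinearMap.ker_eq_bot, eq_bot_iff]
    intro q hq
    obtain ⟨q1, rfl⟩ := Submodule.mkQ_surjective _ q
    obtain ⟨x, rfl⟩ := Submodule.mkQ_surjective DB q1
    rw [LinearMap.mem_ker] at hq
    rw [Submodule.mem_bot]
    exact hinjker x hq
  let e := Equiv.ofBijective gbar ⟨hinj, hsurj⟩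
  refine ⟨?_⟩
  letI : Module A ((HB ⧸ DB) ⧸ (J • (⊤ : Submodule B (HB ⧸ DB)))) :=
    Module.compHom _ (baseHom A r n B)
  exact
    { toFun := gbar
      map_add' := fun x y => map_add gbar x y
      map_smul' := fun a x => by
        show gbar ((baseHom A r n B a) • x) = a • gbar x
        rw [map_smulₛₗ, phiB_baseHom A r n w hc B a]
      invFun := e.symm
      left_inv := e.left_inv
      right_inv := e.right_inv }
end

section
/- In the generic setting: for every prime 𝔭 ∈ Min_B(B/I_r(X)B), the ideal I_{r−1}(X)B of (r−1)-minors of X is not contained in 𝔭. -/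
/-!
STATEMENT 12: In the generic setting: for every prime `𝔭 ∈ Min_B(B/I_r(X)B)` (a minimal
prime over the ideal `I_r(X)B` of maximal minors of the generic matrix), the ideal
`I_{r-1}(X)B` of `(r-1) × (r-1)` minors of `X` is not contained in `𝔭`.
(For `r = 1`, `I_0(X)B` is the unit ideal — a `0 × 0` minor is the empty determinant `1` —
so the statement holds with this convention.)
-/

open MvPolynomial IsLocalRing

section AuxLemmas

open Finset in
lemma sum_fin_dite_lt {M : Type*} [AddCommMonoid M] {r k : ℕ} (h : k ≤ r) (F : Fin k → M) :
    (∑ l : Fin r, if h' : (l : ℕ) < k then F ⟨l, h'⟩ else 0) = ∑ l : Fin k, F l := by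
  rw [Fin.sum_univ_eq_sum_range (fun l => if h' : l < k then F ⟨l, h'⟩ else 0) r]
  have h2 : (∑ l : Fin k, F l)
      = ∑ l ∈ range k, (if h' : l < k then F ⟨l, h'⟩ else 0) := by
    rw [← Fin.sum_univ_eq_sum_range (fun l => if h' : l < k then F ⟨l, h'⟩ else 0) k]
    exact Finset.sum_congr rfl fun i _ => by simp
  rw [h2]
  exact (Finset.sum_subset (Finset.range_subset_range.mpr h)
    (fun x _ hx => dif_neg (by simpa using hx))).symm

lemma exists_mul_pow_mem_of_mem_minimalPrimes {R : Type*} [CommRing R] {I p : Ideal R}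
    (hp : p ∈ I.minimalPrimes) {x : R} (hx : x ∈ p) :
    ∃ s, s ∉ p ∧ ∃ k, s * x ^ k ∈ I := by
  rw [Ideal.minimalPrimes_eq_comap] at hp
  obtain ⟨q, hq, rfl⟩ := hp
  haveI hqp : q.IsPrime := hq.1.1
  have hx' : Ideal.Quotient.mk I x ∈ q := hx
  have hnil : IsNilpotent
      (algebraMap (R ⧸ I) (Localization q.primeCompl) (Ideal.Quotient.mk I x)) := by
    haveI : Ring.KrullDimLE 0 (Localization q.primeCompl) := .of_isLocalization _ hq _
    rw [Ring.KrullDimLE.isNilpotent_iff_mem_maximalIdeal]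
    exact (IsLocalization.AtPrime.to_map_mem_maximal_iff (Localization q.primeCompl) q _).mpr hx'
  obtain ⟨k, hk⟩ := hnil
  rw [← map_pow, IsLocalization.map_eq_zero_iff q.primeCompl] at hk
  obtain ⟨⟨s', hs'⟩, hs⟩ := hk
  obtain ⟨s, rfl⟩ := Ideal.Quotient.mk_surjective s'
  refine ⟨s, fun hsp => hs' hsp, k, ?_⟩
  rw [← Ideal.Quotient.eq_zero_iff_mem, map_mul, map_pow]
  exact hs

end AuxLemmas


set_option maxHeartbeats 2000000 in
set_option synthInstance.maxHeartbeats 400000 in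
theorem submaximal_minors_not_le_minimal_prime
    (A : Type*) [CommRing A] [IsNoetherianRing A] [IsLocalRing A]
    (d : ℕ) (hd : 0 < d) (hdim : ringKrullDim A = (d : ℕ))
    (r : ℕ) (hr : 0 < r) (n : ℕ) (hn : n = d + r - 1)
    (B : Type*) [CommRing B] [Algebra (MvPolynomial (Fin r × Fin n) A) B]
    [IsLocalization.AtPrime B (gradedMaxIdeal A r n)]
    (𝔭 : Ideal B) (h𝔭 : 𝔭 ∈ (maxMinorsIdeal A r n B).minimalPrimes) :
    ¬ minorsIdeal A r n B (r - 1) ≤ 𝔭 := by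
  classical
  intro hle
  haveI h𝔭p : 𝔭.IsPrime := h𝔭.1.1
  have hr1r : r - 1 ≤ r := Nat.sub_le r 1
  have hr1n : r - 1 ≤ n := by omega
  set R := MvPolynomial (Fin r × Fin n) A with hRdef
  set f : R →+* B := algebraMap R B with hfdef
  set preMax : Ideal R :=
    Ideal.span (Set.range fun c : Fin r ↪ Fin n =>
      (Matrix.of fun i j => (MvPolynomial.X (i, c j) : R)).det) with hpreMax
  have hmapgen : ∀ c : Fin r ↪ Fin n,
      f ((Matrix.of fun i j => (MvPolynomial.X (i, c j) : R)).det)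
        = (Matrix.of fun i j => xvar A r n B (i, c j)).det := by
    intro c
    rw [RingHom.map_det]
    rfl
  have hmapMax : Ideal.map f preMax = maxMinorsIdeal A r n B := by
    rw [hpreMax, Ideal.map_span, ← Set.range_comp, maxMinorsIdeal]
    exact congrArg Ideal.span (congrArg Set.range (funext fun c => hmapgen c))
  have hMaxle : maxMinorsIdeal A r n B ≤ 𝔭 := h𝔭.1.2
  -- the leading (r-1)-minor
  set mR : R := (Matrix.of fun i j : Fin (r - 1) =>
      (MvPolynomial.X (Fin.castLE hr1r i, Fin.castLE hr1n j) : R)).det with hmRdef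
  have hmB : f mR = (Matrix.of fun i j : Fin (r - 1) =>
      xvar A r n B (Fin.castLE hr1r i, Fin.castLE hr1n j)).det := by
    rw [hmRdef, RingHom.map_det]
    rfl
  have hmB𝔭 : f mR ∈ 𝔭 := by
    apply hle
    rw [hmB, minorsIdeal]
    exact Ideal.subset_span ⟨(Fin.castLEEmb hr1r, Fin.castLEEmb hr1n), rfl⟩
  -- minimal prime gives s ∉ 𝔭 with s * (f mR) ^ k ∈ I_r B
  obtain ⟨s, hs𝔭, k, hsk⟩ := exists_mul_pow_mem_of_mem_minimalPrimes h𝔭 hmB𝔭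
  -- clear denominators and pull back to R
  obtain ⟨⟨a, t⟩, hat⟩ := IsLocalization.surj (gradedMaxIdeal A r n).primeCompl s
  dsimp only at hat
  have h1 : f (a * mR ^ k) ∈ Ideal.map f preMax := by
    rw [hmapMax, map_mul, map_pow]
    have heq : f a * f mR ^ k = s * f mR ^ k * f ↑t := by
      rw [← hat]; ring
    rw [heq]
    exact Ideal.mul_mem_right _ _ hsk
  rw [IsLocalization.mem_map_algebraMap_iff (gradedMaxIdeal A r n).primeCompl B] at h1
  obtain ⟨⟨i0, t'⟩, hit⟩ := h1
  dsimp only at hit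
  rw [← map_mul] at hit
  obtain ⟨u, hu⟩ := IsLocalization.exists_of_eq
    (M := (gradedMaxIdeal A r n).primeCompl) (S := B) hit
  set s₀ : R := ↑u * ↑t' * a with hs₀def
  have hs₀mem : s₀ * mR ^ k ∈ preMax := by
    have heq : s₀ * mR ^ k = ↑u * (a * mR ^ k * ↑t') := by rw [hs₀def]; ring
    rw [heq, hu]
    exact Ideal.mul_mem_left _ _ i0.2
  set P : Ideal R := 𝔭.comap f with hPdef
  haveI hPp : P.IsPrime := Ideal.IsPrime.comap f
  have hs₀P : s₀ ∉ P := by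
    intro hP
    have h2 : f (↑u * ↑t') * (s * f ↑t) ∈ 𝔭 := by
      rw [hat, ← map_mul]
      exact hP
    have h3 : f (↑u * ↑t') * f ↑t * s ∈ 𝔭 := by
      have : f (↑u * ↑t') * f ↑t * s = f (↑u * ↑t') * (s * f ↑t) := by ring
      rw [this]; exact h2
    have h4 : IsUnit (f (↑u * ↑t') * f ↑t) := by
      rw [map_mul]
      exact ((IsLocalization.map_units B u).mul (IsLocalization.map_units B t')).mul
        (IsLocalization.map_units B t)
    rcases h𝔭p.mem_or_mem h3 with h | h
    · exact h𝔭p.ne_top (Ideal.eq_top_of_isUnit_mem _ h h4)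
    · exact hs𝔭 h
  have hpreP : preMax ≤ P := by
    rw [hPdef, ← Ideal.map_le_iff_le_comap, hmapMax]
    exact hMaxle
  -- the generic specialization X ↦ U * V (rank ≤ r-1)
  set q : Ideal A := P.comap (MvPolynomial.C : A →+* R) with hqdef
  haveI hqp : q.IsPrime := Ideal.IsPrime.comap _
  set D := A ⧸ q with hDdef
  haveI : IsDomain D := Ideal.Quotient.isDomain q
  set T := MvPolynomial ((Fin r × Fin r) ⊕ (Fin r × Fin n)) D with hTdef
  set χ : R →+* T := MvPolynomial.eval₂Hom
      ((MvPolynomial.C : D →+* T).comp (Ideal.Quotient.mk q))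
      (fun p : Fin r × Fin n => ∑ l : Fin r,
        if (l : ℕ) < r - 1 then
          MvPolynomial.X (Sum.inl (p.1, l)) * MvPolynomial.X (Sum.inr (l, p.2))
        else 0) with hχdef
  -- χ kills all maximal minors
  have hχmax : preMax ≤ RingHom.ker χ := by
    rw [hpreMax, Ideal.span_le]
    rintro _ ⟨c, rfl⟩
    rw [SetLike.mem_coe, RingHom.mem_ker, RingHom.map_det]
    have hfact : (Matrix.of fun i j => (MvPolynomial.X (i, c j) : R)).map χ
        = (Matrix.of fun i l : Fin r => (MvPolynomial.X (Sum.inl (i, l)) : T)) *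
          (Matrix.of fun l j : Fin r =>
            if (l : ℕ) < r - 1 then (MvPolynomial.X (Sum.inr (l, c j)) : T) else 0) := by
      refine Matrix.ext fun i j => ?_
      simp only [Matrix.map_apply, Matrix.mul_apply, Matrix.of_apply, hχdef,
        MvPolynomial.eval₂Hom_X', mul_ite, mul_zero]
      rw [MvPolynomial.eval₂Hom_X']
    rw [RingHom.mapMatrix_apply, hfact, Matrix.det_mul]
    have hV : (Matrix.of fun l j : Fin r =>
        if (l : ℕ) < r - 1 then (MvPolynomial.X (Sum.inr (l, c j)) : T) else 0).det = 0 := by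
      apply Matrix.det_eq_zero_of_row_eq_zero ⟨r - 1, Nat.sub_lt hr Nat.one_pos⟩
      intro j
      exact if_neg (lt_irrefl _)
    rw [hV, mul_zero]
  -- χ does not kill the leading (r-1)-minor
  have hχm : χ mR ≠ 0 := by
    intro h0
    set pt : ((Fin r × Fin r) ⊕ (Fin r × Fin n)) → D := fun w =>
      match w with
      | Sum.inl (i, l) => if (i : ℕ) = (l : ℕ) then 1 else 0
      | Sum.inr (l, j) => if (l : ℕ) = (j : ℕ) then 1 else 0 with hptdef
    have h2 : MvPolynomial.eval pt (χ mR) = 1 := by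
      rw [hmRdef, RingHom.map_det, RingHom.map_det]
      simp only [RingHom.mapMatrix_apply]
      have hone : ((Matrix.of fun i j : Fin (r - 1) =>
          (MvPolynomial.X (Fin.castLE hr1r i, Fin.castLE hr1n j) : R)).map χ).map
            (MvPolynomial.eval pt) = 1 := by
        refine Matrix.ext fun i j => ?_
        simp only [Matrix.map_apply, Matrix.of_apply, hχdef, MvPolynomial.eval₂Hom_X']
        rw [MvPolynomial.eval₂Hom_X', map_sum]
        have hterm : ∀ l : Fin r,
            MvPolynomial.eval pt (if (l : ℕ) < r - 1 then
              MvPolynomial.X (Sum.inl (Fin.castLE hr1r i, l)) *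
                MvPolynomial.X (Sum.inr (l, Fin.castLE hr1n j))
              else 0)
            = if l = Fin.castLE hr1r i then (if (i : ℕ) = (j : ℕ) then 1 else 0) else 0 := by
          intro l
          by_cases hl : (l : ℕ) < r - 1
          · rw [if_pos hl, map_mul, MvPolynomial.eval_X, MvPolynomial.eval_X]
            by_cases hli : l = Fin.castLE hr1r i
            · rw [if_pos hli, hli, hptdef]
              simp [Fin.castLE]
            · rw [if_neg hli, hptdef]
              have hne : ¬ ((Fin.castLE hr1r i : Fin r) : ℕ) = (l : ℕ) := by
                intro hh
                exact hli (Fin.ext hh.symm)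
              simp only []
              rw [if_neg hne, zero_mul]
          · rw [if_neg hl, map_zero, if_neg]
            intro hli
            apply hl
            rw [hli]
            exact lt_of_lt_of_le i.isLt (le_refl _)
        rw [Finset.sum_congr rfl fun l _ => hterm l, Finset.sum_ite_eq' Finset.univ]
        rw [if_pos (Finset.mem_univ _), Matrix.one_apply]
        by_cases hij : i = j
        · rw [if_pos hij, if_pos (by rw [hij])]
        · rw [if_neg hij, if_neg (fun hh => hij (Fin.ext hh))]
      rw [hone, Matrix.det_one]
    rw [h0, map_zero] at h2
    exact zero_ne_one h2
  have hχs₀ : χ s₀ = 0 := by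
    have h0 : χ s₀ * χ mR ^ k = 0 := by
      rw [← map_pow, ← map_mul]
      exact hχmax hs₀mem
    rcases mul_eq_zero.mp h0 with h | h
    · exact h
    · exact absurd h (pow_ne_zero k hχm)
  -- fraction field of R/P and rank factorization
  set Rq := R ⧸ P with hRqdef
  haveI : IsDomain Rq := Ideal.Quotient.isDomain P
  set F := FractionRing Rq with hFdef
  set g : R →+* F := (algebraMap Rq F).comp (Ideal.Quotient.mk P) with hgdef
  have hgP : ∀ x ∈ P, g x = 0 := by
    intro x hx
    rw [hgdef, RingHom.comp_apply, Ideal.Quotient.eq_zero_iff_mem.mpr hx, map_zero]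
  set cols : Fin n → (Fin r → F) := fun j i => g (MvPolynomial.X (i, j)) with hcolsdef
  have hminors : ∀ c : Fin r ↪ Fin n,
      (Matrix.of fun i j : Fin r => cols (c j) i).det = 0 := by
    intro c
    have heq : (Matrix.of fun i j : Fin r => cols (c j) i)
        = (Matrix.of fun i j => (MvPolynomial.X (i, c j) : R)).map g := rfl
    rw [heq, ← RingHom.mapMatrix_apply, ← RingHom.map_det]
    exact hgP _ (hpreP (Ideal.subset_span ⟨c, rfl⟩))
  set Sp : Submodule F (Fin r → F) := Submodule.span F (Set.range cols) with hSpdef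
  have hspan : Sp ≠ ⊤ := by
    intro htop
    obtain ⟨b, hbsub, hbspan, hbli⟩ := exists_linearIndependent F (Set.range cols)
    have hbtop : Submodule.span F b = ⊤ := by rw [hbspan, ← hSpdef, htop]
    let bas : Module.Basis b F (Fin r → F) := Module.Basis.mk hbli
      (by rw [Subtype.range_coe]; exact hbtop.ge)
    haveI : Fintype b := FiniteDimensional.fintypeBasisIndex bas
    have hcard : Fintype.card b = r := by
      have h1 := Module.finrank_eq_card_basis bas
      rw [Module.finrank_pi, Fintype.card_fin] at h1
      omega
    let e : Fin r ≃ b := (Fintype.equivFinOfCardEq hcard).symm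
    have hcol : ∀ x : b, ∃ j : Fin n, cols j = (x : Fin r → F) := fun x => hbsub x.2
    choose cidx hcidx using hcol
    have hinj : Function.Injective (fun i : Fin r => cidx (e i)) := by
      intro i i' hii
      have h2 : ((e i : b) : Fin r → F) = ((e i' : b) : Fin r → F) := by
        rw [← hcidx (e i), ← hcidx (e i')]
        exact congrArg cols hii
      exact e.injective (Subtype.ext h2)
    set c : Fin r ↪ Fin n := ⟨fun i => cidx (e i), hinj⟩ with hcdef
    set Mc : Matrix (Fin r) (Fin r) F := (Matrix.of fun i j => cols (c j) i) with hMcdef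
    have hli : LinearIndependent F (fun j : Fin r => Mc.transpose j) := by
      have hcols2 : (fun j : Fin r => Mc.transpose j) = fun j : Fin r => ((e j : b) : Fin r → F) := by
        funext j
        funext i
        rw [Matrix.transpose_apply, hMcdef, Matrix.of_apply]
        exact congrFun (hcidx (e j)) i
      rw [hcols2]
      exact hbli.comp e e.injective
    have hdet0 := hminors c
    exact ((Matrix.isUnit_iff_isUnit_det _).mp
      (Matrix.linearIndependent_cols_iff_isUnit.mp hli)).ne_zero hdet0
  have hfr : Module.finrank F ↥Sp ≤ r - 1 := by
    have h1 : Module.finrank F ↥Sp < Module.finrank F (Fin r → F) :=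
      Submodule.finrank_lt hspan
    rw [Module.finrank_pi, Fintype.card_fin] at h1
    omega
  set t0 := Module.finrank F ↥Sp with ht0def
  set bb := Module.finBasis F ↥Sp with hbbdef
  set w : Fin (r - 1) → (Fin r → F) := fun l =>
    if h : (l : ℕ) < t0 then ((bb ⟨(l : ℕ), h⟩ : Sp) : Fin r → F) else 0 with hwdef
  have hw : ∀ j, cols j ∈ Submodule.span F (Set.range w) := by
    intro j
    have hjSp : cols j ∈ Sp := Submodule.subset_span ⟨j, rfl⟩
    have hSple : Sp ≤ Submodule.span F (Set.range w) := by
      have h2 : (Set.range fun l : Fin t0 => ((bb l : Sp) : Fin r → F))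
          = Sp.subtype '' Set.range bb := by
        rw [← Set.range_comp]; rfl
      have h1 : Sp = Submodule.span F
          (Set.range fun l : Fin t0 => ((bb l : Sp) : Fin r → F)) := by
        rw [h2, Submodule.span_image, Module.Basis.span_eq, Submodule.map_top, Submodule.range_subtype]
      rw [h1, Submodule.span_le]
      rintro _ ⟨l, rfl⟩
      refine Submodule.subset_span ⟨⟨(l : ℕ), lt_of_lt_of_le l.isLt hfr⟩, ?_⟩
      simp [hwdef]
    exact hSple hjSp
  choose vj hvj using fun j => (Submodule.mem_span_range_iff_exists_fun F).mp (hw j)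
  set ψ : D →+* F := Ideal.Quotient.lift q (g.comp (MvPolynomial.C : A →+* R))
      (fun a ha => by
        rw [RingHom.comp_apply]
        exact hgP _ (Ideal.mem_comap.mp ha)) with hψdef
  set ptF : ((Fin r × Fin r) ⊕ (Fin r × Fin n)) → F := fun wv =>
    match wv with
    | Sum.inl (i, l) => if h : (l : ℕ) < r - 1 then w ⟨(l : ℕ), h⟩ i else 0
    | Sum.inr (l, j) => if h : (l : ℕ) < r - 1 then vj j ⟨(l : ℕ), h⟩ else 0 with hptFdef
  set e2 : T →+* F := MvPolynomial.eval₂Hom ψ ptF with he2def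
  have hcomp : e2.comp χ = g := by
    apply MvPolynomial.ringHom_ext
    · intro a
      rw [RingHom.comp_apply, hχdef, MvPolynomial.eval₂Hom_C, RingHom.comp_apply, he2def,
        MvPolynomial.eval₂Hom_C, hψdef, Ideal.Quotient.lift_mk, RingHom.comp_apply]
    · intro p
      rw [RingHom.comp_apply, hχdef, MvPolynomial.eval₂Hom_X', map_sum]
      have hterm : ∀ l : Fin r,
          e2 (if (l : ℕ) < r - 1 then
            MvPolynomial.X (Sum.inl (p.1, l)) * MvPolynomial.X (Sum.inr (l, p.2)) else 0)
          = if h : (l : ℕ) < r - 1 then vj p.2 ⟨(l : ℕ), h⟩ * w ⟨(l : ℕ), h⟩ p.1 else 0 := by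
        intro l
        by_cases hl : (l : ℕ) < r - 1
        · rw [if_pos hl, dif_pos hl, map_mul, he2def, MvPolynomial.eval₂Hom_X',
            MvPolynomial.eval₂Hom_X', hptFdef]
          simp only []
          rw [dif_pos hl, dif_pos hl]
          ring
        · rw [if_neg hl, dif_neg hl, map_zero]
      rw [Finset.sum_congr rfl fun l _ => hterm l,
        sum_fin_dite_lt (Nat.sub_le r 1) (fun l : Fin (r - 1) => vj p.2 l * w l p.1)]
      have h3 := congrFun (hvj p.2) p.1
      rw [Finset.sum_apply] at h3
      simp only [Pi.smul_apply, smul_eq_mul] at h3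
      rw [h3]
  have hgs₀ : g s₀ = 0 := by
    have h4 := RingHom.congr_fun hcomp s₀
    rw [RingHom.comp_apply, hχs₀, map_zero] at h4
    exact h4.symm
  have hs₀P' : s₀ ∈ P := by
    have h2 : Ideal.Quotient.mk P s₀ = 0 := by
      apply IsFractionRing.injective Rq F
      rw [map_zero]
      exact hgs₀
    exact Ideal.Quotient.eq_zero_iff_mem.mp h2
  exact hs₀P hs₀P'
end
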